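/- arXiv:2505.05991 — 2 statements merged into one kernel-verified Lean document; each statement's English description precedes it below -/
import Mathlib

section
/- Let f : Θ × ℝ^d → ℝ be L_f-Lipschitz jointly in (θ, x), and let S : Θ → (nonempty compact subsets of ℝ^d) be a set-valued map that is Lipschitz in the Hausdorff distance with constant C, i.e., dist_H(S(θ₁), S(θ₂)) ≤ C‖θ₁ − θ₂‖. Then the function F(θ) := max_{x ∈ S(θ)} f(θ, x) satisfies |F(θ₁) − F(θ₂)| ≤ L_f(1 + C)‖θ₁ − θ₂‖. -/
theorem stmt6 {m d : ℕ}
    (f : EuclideanSpace ℝ (Fin m) → EuclideanSpace ℝ (Fin d) → ℝ)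
    (S : EuclideanSpace ℝ (Fin m) → Set (EuclideanSpace ℝ (Fin d)))
    (Lf C : ℝ) (hLf : 0 ≤ Lf) (hC : 0 ≤ C)
    (hf : ∀ θ₁ x₁ θ₂ x₂, |f θ₁ x₁ - f θ₂ x₂| ≤ Lf * (‖θ₁ - θ₂‖ + ‖x₁ - x₂‖))
    (hSne : ∀ θ, (S θ).Nonempty) (hScomp : ∀ θ, IsCompact (S θ))
    (hSlip : ∀ θ₁ θ₂, Metric.hausdorffDist (S θ₁) (S θ₂) ≤ C * ‖θ₁ - θ₂‖)
    (θ₁ θ₂ : EuclideanSpace ℝ (Fin m)) :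
    |sSup (f θ₁ '' S θ₁) - sSup (f θ₂ '' S θ₂)| ≤ Lf * (1 + C) * ‖θ₁ - θ₂‖ := by
  have hcont : ∀ θ, Continuous (f θ) := by
    intro θ
    refine (LipschitzWith.of_dist_le_mul (K := ⟨Lf, hLf⟩) ?_).continuous
    intro x y
    have := hf θ x θ y
    simp only [sub_self, norm_zero, zero_add] at this
    exact (by simpa [Real.dist_eq, dist_eq_norm] using this : dist (f θ x) (f θ y) ≤ Lf * dist x y)
  have hbdd : ∀ θ, BddAbove (f θ '' S θ) :=
    fun θ => ((hScomp θ).image (hcont θ)).bddAbove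
  have key : ∀ a b, sSup (f a '' S a) - sSup (f b '' S b) ≤ Lf * (1 + C) * ‖a - b‖ := by
    intro a b
    rw [sub_le_iff_le_add]
    refine csSup_le ((hSne a).image _) ?_
    rintro z ⟨x, hx, rfl⟩
    have hne : EMetric.hausdorffEdist (S a) (S b) ≠ ⊤ :=
      Metric.hausdorffEdist_ne_top_of_nonempty_of_bounded (hSne a) (hSne b)
        (hScomp a).isBounded (hScomp b).isBounded
    have hinf : Metric.infDist x (S b) ≤ C * ‖a - b‖ :=
      le_trans (Metric.infDist_le_hausdorffDist_of_mem hx hne) (hSlip a b)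
    obtain ⟨y, hy, hxy⟩ := (hScomp b).exists_infDist_eq_dist (hSne b) x
    have hdxy : ‖x - y‖ ≤ C * ‖a - b‖ := by
      rw [← dist_eq_norm, ← hxy]; exact hinf
    have h1 : f a x - f b y ≤ Lf * (‖a - b‖ + ‖x - y‖) :=
      le_trans (le_abs_self _) (hf a x b y)
    have h2 : f b y ≤ sSup (f b '' S b) := le_csSup (hbdd b) ⟨y, hy, rfl⟩
    have h3 : Lf * (‖a - b‖ + ‖x - y‖) ≤ Lf * (1 + C) * ‖a - b‖ := by
      have : ‖a - b‖ + ‖x - y‖ ≤ (1 + C) * ‖a - b‖ := by nlinarith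
      calc Lf * (‖a - b‖ + ‖x - y‖) ≤ Lf * ((1 + C) * ‖a - b‖) :=
            mul_le_mul_of_nonneg_left this hLf
        _ = Lf * (1 + C) * ‖a - b‖ := by ring
    linarith
  have h12 := key θ₁ θ₂
  have h21 := key θ₂ θ₁
  rw [norm_sub_rev θ₂ θ₁] at h21
  rw [abs_sub_le_iff]
  exact ⟨h12, h21⟩
end

section
/- For every d ≥ 1, n ≥ 0 with d + n ≥ 2, and constants c > 0, R > 0 satisfying cR² > (d + n)/2, the tail integral satisfies ∫_{‖x‖ > R} ‖x‖^n e^{−c‖x‖²} dx ≤ 2 π^{d+n−1} c^{−1} max{(d+n)/2, 1} R^{d+n−2} e^{−cR²}, where the integral is over x ∈ ℝ^d. -/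
open MeasureTheory Set Filter

private lemma intOnAux {c R : ℝ} (hc : 0 < c) (hR : 0 < R) (m : ℕ) :
    IntegrableOn (fun y : ℝ => y ^ m * Real.exp (-c * y ^ 2)) (Ioi R) := by
  have h : IntegrableOn (fun y : ℝ => y ^ (m : ℝ) * Real.exp (-c * y ^ 2)) (Ioi R) :=
    (integrableOn_rpow_mul_exp_neg_mul_sq hc
      (by exact_mod_cast lt_of_lt_of_le (by norm_num : (-1:ℝ) < 0) (Nat.cast_nonneg m))).mono_set
      (Ioi_subset_Ioi hR.le)
  simpa [Real.rpow_natCast] using h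

private lemma radialBound (k : ℕ) {c R : ℝ} (hc : 0 < c) (hR : 0 < R)
    (hcR : ((k : ℝ) + 2) / 2 < c * R ^ 2) :
    ∫ y in Ioi R, y ^ (k + 1) * Real.exp (-c * y ^ 2) ≤
      ((k : ℝ) + 2) / (4 * c) * R ^ k * Real.exp (-c * R ^ 2) := by
  set A : ℝ := ((k : ℝ) + 2) / (4 * c) with hA
  have hA0 : 0 < A := by positivity
  set F : ℝ → ℝ := fun y => -A * (y ^ k * Real.exp (-c * y ^ 2)) with hF
  set F' : ℝ → ℝ := fun y => -A * ((k * y ^ (k - 1)) * Real.exp (-c * y ^ 2)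
      + y ^ k * (Real.exp (-c * y ^ 2) * (-(c * (2 * y))))) with hF'
  have hderiv : ∀ y ∈ Ici R, HasDerivAt F (F' y) y := by
    intro y _
    have h1 : HasDerivAt (fun y : ℝ => y ^ k) ((k : ℝ) * y ^ (k - 1)) y := hasDerivAt_pow k y
    have h0 : HasDerivAt (fun y : ℝ => -c * y ^ 2) (-(c * (2 * y))) y := by
      have := (hasDerivAt_pow 2 y).const_mul (-c)
      exact this.congr_deriv (by norm_num)
    have h2 : HasDerivAt (fun y : ℝ => Real.exp (-c * y ^ 2))
        (Real.exp (-c * y ^ 2) * (-(c * (2 * y)))) y := h0.exp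
    exact (h1.mul h2).const_mul (-A)
  have hFint : IntegrableOn F' (Ioi R) := by
    have e1 := (intOnAux hc hR (k - 1)).const_mul (-A * k)
    have e2 := (intOnAux hc hR (k + 1)).const_mul (2 * c * A)
    have : F' = fun y => (-A * k) * (y ^ (k - 1) * Real.exp (-c * y ^ 2))
        + (2 * c * A) * (y ^ (k + 1) * Real.exp (-c * y ^ 2)) := by
      funext y; simp only [hF']; ring
    rw [this]
    exact e1.add e2
  have htend : Tendsto F atTop (nhds 0) := by
    have hexp : Tendsto (fun x : ℝ => Real.exp (-(1/2) * x)) atTop (nhds 0) := by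
      have h1 : Tendsto (fun x : ℝ => -(1/2) * x) atTop atBot :=
        Tendsto.const_mul_atTop_of_neg (show (-(1/2):ℝ) < 0 by norm_num) tendsto_id
      exact Real.tendsto_exp_atBot.comp h1
    have h := (rpow_mul_exp_neg_mul_sq_isLittleO_exp_neg hc (k : ℝ)).isBigO.trans_tendsto hexp
    simp only [Real.rpow_natCast] at h
    simpa [hF] using h.const_mul (-A)
  have key : ∫ y in Ioi R, F' y = 0 - F R :=
    integral_Ioi_of_hasDerivAt_of_tendsto' hderiv hFint htend
  have hmono : ∫ y in Ioi R, y ^ (k + 1) * Real.exp (-c * y ^ 2) ≤ ∫ y in Ioi R, F' y := by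
    refine setIntegral_mono_on (intOnAux hc hR (k + 1)) hFint measurableSet_Ioi ?_
    intro y hy
    have hy0 : 0 < y := lt_trans hR hy
    have hyR : R < y := hy
    have he : 0 < Real.exp (-c * y ^ 2) := Real.exp_pos _
    have hy2 : R ^ 2 ≤ y ^ 2 := by nlinarith
    rcases Nat.eq_zero_or_pos k with hk | hk
    · subst hk
      have h2cA : A * (2 * c) = 1 := by rw [hA]; field_simp; ring
      simp only [hF', Nat.zero_sub, pow_zero, Nat.cast_zero, zero_mul, zero_add, pow_one]
      have heq : -A * (1 * (Real.exp (-c * y ^ 2) * -(c * (2 * y))))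
          = y * Real.exp (-c * y ^ 2) := by
        calc -A * (1 * (Real.exp (-c * y ^ 2) * -(c * (2 * y))))
            = (A * (2 * c)) * (y * Real.exp (-c * y ^ 2)) := by ring
          _ = y * Real.exp (-c * y ^ 2) := by rw [h2cA]; ring
      linarith [heq]
    · obtain ⟨m, rfl⟩ : ∃ m, k = m + 1 := ⟨k - 1, by omega⟩
      simp only [hF', Nat.add_sub_cancel]
      have h4cA : 4 * c * A = (m : ℝ) + 3 := by rw [hA]; push_cast; field_simp; ring
      have hym : (0:ℝ) ≤ y ^ m := by positivity
      have hRy : ((m : ℝ) + 3) / 2 < c * y ^ 2 := by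
        push_cast at hcR; nlinarith
      have h2A : 2 * A < y ^ 2 := by
        have h1 : 4 * c * A < 2 * c * y ^ 2 := by rw [h4cA]; linarith
        nlinarith
      push_cast
      have hkey : y ^ (m + 1 + 1)
          ≤ (2 * c * A) * (y ^ m * y ^ 2) - A * ((m : ℝ) + 1) * y ^ m := by
        have e1 : (2 * c * A) * (y ^ m * y ^ 2) - A * ((m : ℝ) + 1) * y ^ m - y ^ (m + 1 + 1)
            = ((m : ℝ) + 1) / 2 * (y ^ m * (y ^ 2 - 2 * A))
              + (2 * c * A - ((m : ℝ) + 3) / 2) * (y ^ m * y ^ 2) := by ring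
        have e2 : 2 * c * A = ((m : ℝ) + 3) / 2 := by rw [hA]; push_cast; field_simp; ring
        nlinarith [mul_nonneg hym (sub_nonneg.mpr h2A.le), e1, e2,
          mul_nonneg hym (sq_nonneg y),
          mul_nonneg (Nat.cast_nonneg m : (0:ℝ) ≤ m) (mul_nonneg hym (sub_nonneg.mpr h2A.le))]
      have hrhs : -A * (((m : ℝ) + 1) * y ^ m * Real.exp (-c * y ^ 2)
            + y ^ (m + 1) * (Real.exp (-c * y ^ 2) * -(c * (2 * y))))
          = Real.exp (-c * y ^ 2)
            * ((2 * c * A) * (y ^ m * y ^ 2) - A * ((m : ℝ) + 1) * y ^ m) := by ring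
      have hle := mul_le_mul_of_nonneg_left hkey he.le
      linarith [hrhs, hle]
  calc ∫ y in Ioi R, y ^ (k + 1) * Real.exp (-c * y ^ 2) ≤ ∫ y in Ioi R, F' y := hmono
    _ = 0 - F R := key
    _ = A * R ^ k * Real.exp (-c * R ^ 2) := by simp only [hF]; ring

private lemma sqrtPiGeOne : (1:ℝ) ≤ Real.sqrt Real.pi := by
  rw [show (1:ℝ) = Real.sqrt 1 by simp]
  exact Real.sqrt_le_sqrt (by linarith [Real.pi_gt_three])

private lemma gammaQuarter : ∀ d : ℕ, 1 ≤ d → (d : ℝ) / 4 ≤ Real.Gamma ((d : ℝ) / 2 + 1) := by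
  intro d
  induction d using Nat.strong_induction_on with
  | _ d ih =>
    intro hd
    match d with
    | 1 =>
      rw [show ((1:ℕ) : ℝ) / 2 + 1 = 1/2 + 1 by norm_num,
        Real.Gamma_add_one (by norm_num), Real.Gamma_one_half_eq]
      nlinarith [sqrtPiGeOne]
    | 2 =>
      rw [show ((2:ℕ) : ℝ) / 2 + 1 = 1 + 1 by norm_num,
        Real.Gamma_add_one (by norm_num), Real.Gamma_one]
      norm_num
    | 3 =>
      rw [show ((3:ℕ) : ℝ) / 2 + 1 = (1/2 + 1) + 1 by norm_num,
        Real.Gamma_add_one (by positivity), Real.Gamma_add_one (by norm_num),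
        Real.Gamma_one_half_eq]
      nlinarith [sqrtPiGeOne]
    | (m + 4) =>
      have h := ih (m + 2) (by omega) (by omega)
      have hne : ((m + 2 : ℕ) : ℝ) / 2 + 1 ≠ 0 := by positivity
      have heq : ((m + 4 : ℕ) : ℝ) / 2 + 1 = (((m + 2 : ℕ) : ℝ) / 2 + 1) + 1 := by
        push_cast; ring
      rw [heq, Real.Gamma_add_one hne]
      have hm2 : (2:ℝ) ≤ ((m + 2 : ℕ) : ℝ) := by exact_mod_cast Nat.le_add_left 2 m
      push_cast at h hm2 ⊢
      nlinarith [h, hm2]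

theorem stmt16 {d : ℕ} (n : ℕ) (hd : 1 ≤ d) (hdn : 2 ≤ d + n)
    (c R : ℝ) (hc : 0 < c) (hR : 0 < R)
    (hcR : ((d : ℝ) + n) / 2 < c * R ^ 2) :
    ∫ x in {x : EuclideanSpace ℝ (Fin d) | R < ‖x‖}, ‖x‖ ^ n * Real.exp (-c * ‖x‖ ^ 2) ≤
      2 * Real.pi ^ (d + n - 1) * c⁻¹ * max (((d : ℝ) + n) / 2) 1 * R ^ (d + n - 2) *
        Real.exp (-c * R ^ 2) := by
  haveI : Nonempty (Fin d) := Fin.pos_iff_nonempty.mp hd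
  haveI : Nontrivial (EuclideanSpace ℝ (Fin d)) := inferInstance
  set k := d + n - 2 with hk
  have hk2 : k + 2 = d + n := by omega
  have hkcast : ((k : ℝ) + 2) = (d : ℝ) + n := by
    rw [show ((k:ℝ) + 2) = ((k + 2 : ℕ) : ℝ) by push_cast; ring, hk2]; push_cast; ring
  set g : ℝ → ℝ := (Ioi R).indicator (fun r => r ^ n * Real.exp (-c * r ^ 2)) with hg
  have hSmeas : MeasurableSet {x : EuclideanSpace ℝ (Fin d) | R < ‖x‖} :=
    measurableSet_lt measurable_const measurable_norm
  have step1 : ∫ x in {x : EuclideanSpace ℝ (Fin d) | R < ‖x‖},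
      ‖x‖ ^ n * Real.exp (-c * ‖x‖ ^ 2) = ∫ x : EuclideanSpace ℝ (Fin d), g ‖x‖ := by
    rw [← integral_indicator hSmeas]
    apply integral_congr_ae
    filter_upwards with x
    by_cases hx : R < ‖x‖ <;>
      simp [hg, Set.indicator, hx, Set.mem_setOf_eq]
  rw [step1, MeasureTheory.integral_fun_norm_addHaar volume g, finrank_euclideanSpace_fin]
  have step3 : ∫ y in Ioi (0:ℝ), y ^ (d - 1) • g y
      = ∫ y in Ioi R, y ^ (k + 1) * Real.exp (-c * y ^ 2) := by
    have hpt : ∀ y : ℝ, y ^ (d - 1) • g y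
        = (Ioi R).indicator (fun y => y ^ (k + 1) * Real.exp (-c * y ^ 2)) y := by
      intro y
      by_cases hy : y ∈ Ioi R
      · simp only [smul_eq_mul, hg, Set.indicator_of_mem hy]
        rw [← mul_assoc, ← pow_add, show d - 1 + n = k + 1 by omega]
      · simp [hg, Set.indicator_of_notMem hy]
    simp only [hpt]
    rw [setIntegral_indicator measurableSet_Ioi, Set.Ioi_inter_Ioi, max_eq_right hR.le]
  rw [step3, nsmul_eq_mul, smul_eq_mul]
  have hrad := radialBound k hc hR (by rw [hkcast]; exact hcR)
  set V : ℝ := (volume (Metric.ball (0 : EuclideanSpace ℝ (Fin d)) 1)).toReal with hV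
  have hV0 : 0 ≤ V := ENNReal.toReal_nonneg
  have hVval : V = Real.sqrt Real.pi ^ d / Real.Gamma ((d : ℝ) / 2 + 1) := by
    rw [hV, EuclideanSpace.volume_ball, Fintype.card_fin]
    rw [ENNReal.toReal_mul, ENNReal.toReal_pow, ENNReal.toReal_ofReal (by norm_num : (0:ℝ) ≤ 1),
      one_pow, one_mul, ENNReal.toReal_ofReal (by positivity)]
  have hGpos : 0 < Real.Gamma ((d : ℝ) / 2 + 1) := Real.Gamma_pos_of_pos (by positivity)
  have hsqrtle : Real.sqrt Real.pi ^ d ≤ Real.pi ^ (d + n - 1) := by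
    have hpi1 : (1:ℝ) ≤ Real.pi := by linarith [Real.pi_gt_three]
    rw [← pow_le_pow_iff_left₀ (by positivity) (by positivity) (two_ne_zero), ← pow_mul, ← pow_mul]
    calc Real.sqrt Real.pi ^ (d * 2) = (Real.sqrt Real.pi ^ 2) ^ d := by rw [← pow_mul, mul_comm]
      _ = Real.pi ^ d := by rw [Real.sq_sqrt Real.pi_pos.le]
      _ ≤ Real.pi ^ ((d + n - 1) * 2) := pow_le_pow_right₀ hpi1 (by omega)
  have hdV : (d : ℝ) * V ≤ 4 * Real.pi ^ (d + n - 1) := by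
    rw [hVval, ← mul_div_assoc, div_le_iff₀ hGpos]
    have h1 := gammaQuarter d hd
    have h2 : (0:ℝ) ≤ Real.pi ^ (d + n - 1) := by positivity
    nlinarith [mul_le_mul_of_nonneg_left h1 (by positivity : (0:ℝ) ≤ 4 * Real.pi ^ (d + n - 1)),
      mul_le_mul_of_nonneg_left hsqrtle (Nat.cast_nonneg d : (0:ℝ) ≤ d)]
  have hB0 : 0 ≤ ((k : ℝ) + 2) / (4 * c) * R ^ k * Real.exp (-c * R ^ 2) := by positivity
  have hmax : max (((d : ℝ) + n) / 2) 1 = ((d : ℝ) + n) / 2 := by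
    apply max_eq_left
    rw [← hkcast]; nlinarith [(Nat.cast_nonneg k : (0:ℝ) ≤ (k:ℝ))]
  calc (d : ℝ) * (V * ∫ y in Ioi R, y ^ (k + 1) * Real.exp (-c * y ^ 2))
      ≤ (d : ℝ) * (V * (((k : ℝ) + 2) / (4 * c) * R ^ k * Real.exp (-c * R ^ 2))) := by
        have := mul_le_mul_of_nonneg_left hrad hV0
        exact mul_le_mul_of_nonneg_left this (Nat.cast_nonneg d)
    _ = ((d : ℝ) * V) * (((k : ℝ) + 2) / (4 * c) * R ^ k * Real.exp (-c * R ^ 2)) := by ring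
    _ ≤ (4 * Real.pi ^ (d + n - 1)) *
          (((k : ℝ) + 2) / (4 * c) * R ^ k * Real.exp (-c * R ^ 2)) :=
        mul_le_mul_of_nonneg_right hdV hB0
    _ = 2 * Real.pi ^ (d + n - 1) * c⁻¹ * max (((d : ℝ) + n) / 2) 1 * R ^ (d + n - 2) *
        Real.exp (-c * R ^ 2) := by
      rw [hmax, ← hkcast, ← hk]
      field_simp
end
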